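/- Let n be a finite index type, let a > 0 and b be real numbers, and let X, Z be n×n real matrices viewed as complex matrices. Then the entrywise symmetric truncated matrix integrals ∫_{-B}^{B} ((iω + a)² + b²)⁻¹ · ((iω + a)·X + b·Z) dω converge entrywise to π·X as B → ∞. -/

import Mathlib

open Filter Real

lemma aux_ne (a : ℝ) (ha : 0 < a) (u : ℝ) : (Complex.I * (u:ℂ) + (a:ℂ)) ≠ 0 := by
  intro h
  have := congrArg Complex.re h
  simp [Complex.add_re, Complex.mul_re] at this
  linarith

lemma aux_cont (a c : ℝ) (ha : 0 < a) :
    Continuous (fun ω : ℝ => (Complex.I * ((ω:ℂ) - c) + a)⁻¹) := by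
  apply Continuous.inv₀
  · fun_prop
  · intro ω
    have := aux_ne a ha (ω - c)
    push_cast at this ⊢
    exact this

lemma key_deriv (a c : ℝ) (ha : 0 < a) (ω : ℝ) :
    HasDerivAt (fun ω : ℝ => ((Real.arctan ((ω - c)/a) : ℝ) : ℂ)
        - Complex.I * ((1/2 : ℝ) * Real.log (a^2 + (ω - c)^2) : ℝ))
      ((Complex.I * ((ω:ℂ) - c) + a)⁻¹) ω := by
  have hpos : (0:ℝ) < a^2 + (ω - c)^2 := by positivity
  have h1 : HasDerivAt (fun ω : ℝ => Real.arctan ((ω - c)/a))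
      ((1 / (1 + ((ω - c)/a)^2)) * (1/a)) ω := by
    have := (Real.hasDerivAt_arctan ((ω - c)/a)).comp ω
      (((hasDerivAt_id ω).sub_const c).div_const a)
    exact this
  have h2 : HasDerivAt (fun ω : ℝ => (1/2 : ℝ) * Real.log (a^2 + (ω - c)^2))
      ((1/2 : ℝ) * ((2*(ω - c)) / (a^2 + (ω - c)^2))) ω := by
    have hin : HasDerivAt (fun ω : ℝ => a^2 + (ω - c)^2) (2*(ω - c)) ω := by
      have := ((hasDerivAt_id ω).sub_const c).pow 2
      simpa using (this.const_add (a^2))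
    refine ((Real.hasDerivAt_log (ne_of_gt hpos)).comp ω hin).const_mul _ |>.congr_deriv ?_
    ring
  have := (h1.ofReal_comp).sub ((h2.ofReal_comp).const_mul Complex.I)
  refine this.congr_deriv ?_
  symm
  have hne := aux_ne a ha (ω - c)
  have hane : (a:ℂ) ≠ 0 := by exact_mod_cast ha.ne'
  have hdne : ((a:ℝ)^2 + (ω - c)^2 : ℝ) ≠ 0 := ne_of_gt hpos
  have hdne' : ((a:ℂ)^2 + ((ω:ℂ) - c)^2) ≠ 0 := by exact_mod_cast hdne
  push_cast
  push_cast at hne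
  have h1ne : (1 + ((ω:ℂ) - c)^2/(a:ℂ)^2) ≠ 0 := by
    have : ((1:ℝ) + (ω - c)^2/a^2) ≠ 0 := by positivity
    exact_mod_cast this
  field_simp [hne]
  ring_nf
  simp only [Complex.I_sq]
  ring


lemma log_diff_tendsto (a c : ℝ) (ha : 0 < a) :
    Tendsto (fun B : ℝ => (1/2 : ℝ) * Real.log (a^2 + (B - c)^2)
      - (1/2 : ℝ) * Real.log (a^2 + (-B - c)^2)) atTop (nhds 0) := by
  have hq : Tendsto (fun B : ℝ => (a^2 + (B - c)^2) / (a^2 + (-B - c)^2)) atTop (nhds 1) := by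
    have hinv : Tendsto (fun B : ℝ => B⁻¹) atTop (nhds 0) := tendsto_inv_atTop_zero
    have hnum : Tendsto (fun B : ℝ => a^2 * (B⁻¹)^2 + (1 - c * B⁻¹)^2) atTop (nhds 1) := by
      have := ((hinv.pow 2).const_mul (a^2)).add
        (((tendsto_const_nhds : Tendsto (fun _ : ℝ => (1:ℝ)) atTop (nhds 1)).sub
          (hinv.const_mul c)).pow 2)
      simpa using this
    have hden : Tendsto (fun B : ℝ => a^2 * (B⁻¹)^2 + (1 + c * B⁻¹)^2) atTop (nhds 1) := by
      have := ((hinv.pow 2).const_mul (a^2)).add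
        (((tendsto_const_nhds : Tendsto (fun _ : ℝ => (1:ℝ)) atTop (nhds 1)).add
          (hinv.const_mul c)).pow 2)
      simpa using this
    have := hnum.div hden one_ne_zero
    rw [div_one] at this
    refine this.congr' ?_
    filter_upwards [eventually_gt_atTop 0] with B hB
    have hBne : B ≠ 0 := ne_of_gt hB
    have hd : (0:ℝ) < a^2 + (-B - c)^2 := by positivity
    have hd2 : (0:ℝ) < a^2 * (B⁻¹)^2 + (1 + c * B⁻¹)^2 := by
      have : a^2 * (B⁻¹)^2 + (1 + c * B⁻¹)^2 = (a^2 + (-B - c)^2) / B^2 := by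
        field_simp; ring
      rw [this]; positivity
    have e1 : a^2 * (B⁻¹)^2 + (1 - c * B⁻¹)^2 = (a^2 + (B - c)^2) / B^2 := by
      field_simp; try ring
    have e2 : a^2 * (B⁻¹)^2 + (1 + c * B⁻¹)^2 = (a^2 + (-B - c)^2) / B^2 := by
      field_simp; try ring
    simp only [Pi.div_apply, e1, e2]
    rw [div_div_div_eq, mul_comm ((a:ℝ)^2 + (B - c)^2) (B^2), mul_div_mul_left _ _ (by positivity : (B:ℝ)^2 ≠ 0)]
  have hlog := (Real.continuousAt_log one_ne_zero).tendsto.comp hq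
  rw [Real.log_one] at hlog
  have : Tendsto (fun B : ℝ => (1/2:ℝ) * Real.log ((a^2 + (B - c)^2) / (a^2 + (-B - c)^2)))
      atTop (nhds 0) := by simpa using hlog.const_mul (1/2 : ℝ)
  refine this.congr ?_
  intro B
  rw [Real.log_div (by positivity) (by positivity)]
  ring

lemma key_tendsto (a c : ℝ) (ha : 0 < a) :
    Tendsto (fun B : ℝ => ∫ ω : ℝ in (-B)..B, (Complex.I * ((ω:ℂ) - c) + a)⁻¹)
      atTop (nhds (Real.pi : ℂ)) := by
  have heval : ∀ B : ℝ, (∫ ω : ℝ in (-B)..B, (Complex.I * ((ω:ℂ) - c) + a)⁻¹)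
      = ((Real.arctan ((B - c)/a) - Real.arctan ((-B - c)/a) : ℝ) : ℂ)
        - Complex.I * (((1/2 : ℝ) * Real.log (a^2 + (B - c)^2)
            - (1/2 : ℝ) * Real.log (a^2 + (-B - c)^2) : ℝ) : ℂ) := by
    intro B
    rw [intervalIntegral.integral_eq_sub_of_hasDerivAt
      (fun x _ => key_deriv a c ha x) ((aux_cont a c ha).intervalIntegrable _ _)]
    push_cast
    ring
  have h1 : Tendsto (fun B : ℝ => Real.arctan ((B - c)/a)) atTop (nhds (Real.pi/2)) := by
    have hdiv : Tendsto (fun B : ℝ => (B - c)/a) atTop atTop :=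
      (tendsto_atTop_add_const_right _ (-c) tendsto_id).atTop_div_const ha
    exact (Real.tendsto_arctan_atTop.mono_right nhdsWithin_le_nhds).comp hdiv
  have h2 : Tendsto (fun B : ℝ => Real.arctan ((-B - c)/a)) atTop (nhds (-(Real.pi/2))) := by
    have hdiv : Tendsto (fun B : ℝ => (-B - c)/a) atTop atBot :=
      (tendsto_atBot_add_const_right _ (-c) tendsto_neg_atTop_atBot).atBot_div_const ha
    exact (Real.tendsto_arctan_atBot.mono_right nhdsWithin_le_nhds).comp hdiv
  have harc : Tendsto (fun B : ℝ => Real.arctan ((B - c)/a) - Real.arctan ((-B - c)/a))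
      atTop (nhds Real.pi) := by
    have := h1.sub h2
    simpa [sub_neg_eq_add, add_halves] using this
  have hlog := log_diff_tendsto a c ha
  have hC : Tendsto (fun B : ℝ =>
      ((Real.arctan ((B - c)/a) - Real.arctan ((-B - c)/a) : ℝ) : ℂ)
        - Complex.I * (((1/2 : ℝ) * Real.log (a^2 + (B - c)^2)
            - (1/2 : ℝ) * Real.log (a^2 + (-B - c)^2) : ℝ) : ℂ))
      atTop (nhds ((Real.pi : ℂ) - Complex.I * ((0:ℝ):ℂ))) := by
    exact ((Complex.continuous_ofReal.tendsto _).comp harc).sub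
      (((Complex.continuous_ofReal.tendsto _).comp hlog).const_mul Complex.I)
  simp only [Complex.ofReal_zero, mul_zero, sub_zero] at hC
  exact hC.congr (fun B => (heval B).symm)

open Matrix

theorem matrix_summand_truncated_integral_tendsto_pi_smul
    {n : Type*} [Fintype n] (a b : ℝ) (ha : 0 < a) (X Z : Matrix n n ℝ) (i j : n) :
    Filter.Tendsto
      (fun B : ℝ => ∫ ω : ℝ in (-B)..B,
        ((((Complex.I * ω + a) ^ 2 + (b : ℂ) ^ 2)⁻¹ •
          ((Complex.I * ω + a) • (X.map Complex.ofReal) +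
            (b : ℂ) • (Z.map Complex.ofReal))) i j))
      Filter.atTop (nhds (((Real.pi : ℂ) • (X.map Complex.ofReal)) i j)) := by
  simp only [Matrix.smul_apply, Matrix.add_apply, Matrix.map_apply, smul_eq_mul]
  have key1 := (key_tendsto a b ha).const_mul (((X i j : ℂ) - Complex.I * (Z i j))/2)
  have key2 := (key_tendsto a (-b) ha).const_mul (((X i j : ℂ) + Complex.I * (Z i j))/2)
  have hsum := key1.add key2
  have hval : ((X i j : ℂ) - Complex.I * (Z i j))/2 * (Real.pi:ℂ)
      + ((X i j : ℂ) + Complex.I * (Z i j))/2 * (Real.pi:ℂ)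
      = (Real.pi:ℂ) * (X i j) := by ring
  rw [hval] at hsum
  refine hsum.congr fun B => ?_
  have hI1 : IntervalIntegrable (fun ω : ℝ => (Complex.I * ((ω:ℂ) - b) + a)⁻¹)
      MeasureTheory.volume (-B) B := (aux_cont a b ha).intervalIntegrable _ _
  have hI2 : IntervalIntegrable (fun ω : ℝ => (Complex.I * ((ω:ℂ) - (-b:ℝ)) + a)⁻¹)
      MeasureTheory.volume (-B) B := (aux_cont a (-b) ha).intervalIntegrable _ _
  rw [← intervalIntegral.integral_const_mul, ← intervalIntegral.integral_const_mul,
    ← intervalIntegral.integral_add (hI1.const_mul _) (hI2.const_mul _)]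
  refine intervalIntegral.integral_congr fun ω _ => ?_
  have h1 : (Complex.I * ((ω:ℂ) - b) + a) ≠ 0 := by
    have := aux_ne a ha (ω - b); push_cast at this; exact this
  have h2 : (Complex.I * ((ω:ℂ) + b) + a) ≠ 0 := by
    have := aux_ne a ha (ω + b); push_cast at this; exact this
  have hprod : ((Complex.I * ω + a) ^ 2 + (b:ℂ) ^ 2)
      = (Complex.I * ((ω:ℂ) - b) + a) * (Complex.I * ((ω:ℂ) + b) + a) := by
    ring_nf
    simp only [Complex.I_sq]
    ring
  push_cast
  rw [hprod]
  field_simp [h1, h2]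
  ring_nf
  simp only [Complex.I_sq, Complex.I_pow_four,
    show (Complex.I)^3 = -Complex.I by rw [pow_succ, Complex.I_sq]; ring]
  ring
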